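/- Consider the k-fold parallel repetition of NC_00(C_5) (k ≥ 1): the 5k players form k groups of 5 (each group indexed by ℤ/5), the question is a k-tuple of types drawn independently and uniformly from the 6 types of NC_00(C_5) (one per group), each player answers according to a function f : {0,1} → {0,1} of their own type bit, the global answer wins iff every group's answers win on that group's type, and player j's payoff is v_{answer_j} if the global answer wins and 0 otherwise, where 0 ≤ v_0 ≤ v_1. Then for every pure local strategy profile, the expected payoff of every player is at most (5/6)^k · v_1, and hence the social welfare (the average of the players' expected payoffs) is at most (5/6)^k · v_1. -/

import Mathlib

open Finset

/-- The 6 questions/types of the game on the 5-cycle: `none` is `Tₐ = 11111`;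
`some i` is the question `Tᵢ` giving input bit 1 to player `i` and 0 to the others. -/
abbrev C5Type := Option (ZMod 5)

/-- Input (type) bit of player `j` in question `t` of `MCG(C₅)`/`NC₀₀(C₅)`. -/
def inputBit : C5Type → ZMod 5 → ZMod 2
  | none, _ => 1
  | some i, j => if j = i then 1 else 0

/-- The involved set of question `t`: all five players for `Tₐ`;
`{i-1, i, i+1}` for `Tᵢ`. -/
def involvedSet : C5Type → Finset (ZMod 5)
  | none => Finset.univ
  | some i => {i - 1, i, i + 1}

/-- The target parity bit of question `t`: `1` for `Tₐ` and `0` for each `Tᵢ`. -/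
def targetBit : C5Type → ZMod 2
  | none => 1
  | some _ => 0

/-- Expected payoff of player `p` in the `k`-fold parallel repetition of
`NC₀₀(C₅)`: the `5k` players are indexed by `Fin k × ZMod 5` (group, vertex);
the question is a `k`-tuple `q` of types, independent and uniform (one per
group); each player answers a function of their own type bit; the global answer
wins iff every group wins on its own type, in which case player `p` receives
`v_{answer_p}`, and `0` otherwise. -/
noncomputable def kFoldUtil (k : ℕ) (v0 v1 : ℝ)
    (f : Fin k × ZMod 5 → ZMod 2 → ZMod 2) (p : Fin k × ZMod 5) : ℝ :=
  (∑ q : Fin k → C5Type,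
    if ∀ g : Fin k,
        ∑ j ∈ involvedSet (q g), f (g, j) (inputBit (q g) j) = targetBit (q g)
    then (if f p (inputBit (q p.1) p.2) = 1 then v1 else v0) else 0) / 6 ^ k

set_option synthInstance.maxSize 1024 in
lemma exists_losing_type (g : ZMod 5 → ZMod 2 → ZMod 2) :
    ∃ t : C5Type, ∑ j ∈ involvedSet t, g j (inputBit t j) ≠ targetBit t := by
  by_contra h
  push_neg at h
  have huniv : (univ : Finset (ZMod 5)) = {0, 1, 2, 3, 4} := by decide
  have ha : g 0 1 + (g 1 1 + (g 2 1 + (g 3 1 + g 4 1))) = 1 := by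
    have := h none
    simp only [involvedSet, inputBit, targetBit, huniv] at this
    rw [Finset.sum_insert (by decide), Finset.sum_insert (by decide),
      Finset.sum_insert (by decide), Finset.sum_insert (by decide),
      Finset.sum_singleton] at this
    exact this
  have d1 : ∀ i : ZMod 5, i - 1 ∉ ({i, i + 1} : Finset (ZMod 5)) := by decide
  have d2 : ∀ i : ZMod 5, i ∉ ({i + 1} : Finset (ZMod 5)) := by decide
  have hi : ∀ i : ZMod 5, g (i - 1) 0 + (g i 1 + g (i + 1) 0) = 0 := by
    intro i
    have := h (some i)
    simp only [involvedSet, targetBit] at this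
    rw [Finset.sum_insert (d1 i), Finset.sum_insert (d2 i),
      Finset.sum_singleton] at this
    simpa [inputBit, show ∀ i : ZMod 5, i - 1 ≠ i from by decide,
      show ∀ i : ZMod 5, i + 1 ≠ i from by decide] using this
  have h0 := hi 0
  have h1 := hi 1
  have h2 := hi 2
  have h3 := hi 3
  have h4 := hi 4
  rw [show (0 : ZMod 5) - 1 = 4 from by decide, show (0 : ZMod 5) + 1 = 1 from by decide] at h0
  rw [show (1 : ZMod 5) - 1 = 0 from by decide, show (1 : ZMod 5) + 1 = 2 from by decide] at h1
  rw [show (2 : ZMod 5) - 1 = 1 from by decide, show (2 : ZMod 5) + 1 = 3 from by decide] at h2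
  rw [show (3 : ZMod 5) - 1 = 2 from by decide, show (3 : ZMod 5) + 1 = 4 from by decide] at h3
  rw [show (4 : ZMod 5) - 1 = 3 from by decide, show (4 : ZMod 5) + 1 = 0 from by decide] at h4
  generalize g 0 0 = a0 at *
  generalize g 1 0 = a1 at *
  generalize g 2 0 = a2 at *
  generalize g 3 0 = a3 at *
  generalize g 4 0 = a4 at *
  generalize g 0 1 = b0 at *
  generalize g 1 1 = b1 at *
  generalize g 2 1 = b2 at *
  generalize g 3 1 = b3 at *
  generalize g 4 1 = b4 at *
  revert ha h0 h1 h2 h3 h4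
  revert a0 a1 a2 a3 a4 b0 b1 b2 b3 b4
  decide

lemma winning_card_le (g : ZMod 5 → ZMod 2 → ZMod 2) :
    (univ.filter (fun t : C5Type =>
      ∑ j ∈ involvedSet t, g j (inputBit t j) = targetBit t)).card ≤ 5 := by
  obtain ⟨t, ht⟩ := exists_losing_type g
  have hss : (univ.filter (fun t : C5Type =>
      ∑ j ∈ involvedSet t, g j (inputBit t j) = targetBit t)) ⊂ univ := by
    refine Finset.ssubset_univ_iff.mpr fun hEq => ht ?_
    have hmem : t ∈ univ.filter (fun t : C5Type =>
        ∑ j ∈ involvedSet t, g j (inputBit t j) = targetBit t) := by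
      rw [hEq]; exact Finset.mem_univ t
    exact (Finset.mem_filter.mp hmem).2
  have := Finset.card_lt_card hss
  have hcard : (univ : Finset C5Type).card = 6 := by decide
  omega

/-- **Payoff and social-welfare bound for the `k`-fold repetition of `NC₀₀(C₅)`.**
For `k ≥ 1`, `0 ≤ v0 ≤ v1`, every pure local strategy profile of the `5k`
players gives every player an expected payoff of at most `(5/6)^k * v1`; hence
the social welfare (the average of the players' expected payoffs) is at most
`(5/6)^k * v1`. -/
theorem kFold_payoff_bound (k : ℕ) (hk : 1 ≤ k) (v0 v1 : ℝ)
    (hv0 : 0 ≤ v0) (hv01 : v0 ≤ v1)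
    (f : Fin k × ZMod 5 → ZMod 2 → ZMod 2) :
    (∀ p : Fin k × ZMod 5, kFoldUtil k v0 v1 f p ≤ (5 / 6) ^ k * v1) ∧
    (∑ p : Fin k × ZMod 5, kFoldUtil k v0 v1 f p) / (5 * k)
      ≤ (5 / 6) ^ k * v1 := by
  have hv1 : 0 ≤ v1 := hv0.trans hv01
  set S : Fin k → Finset C5Type := fun g => univ.filter (fun t : C5Type =>
      ∑ j ∈ involvedSet t, f (g, j) (inputBit t j) = targetBit t) with hS
  have hmain : ∀ p : Fin k × ZMod 5, kFoldUtil k v0 v1 f p ≤ (5 / 6) ^ k * v1 := by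
    intro p
    have h6 : (0 : ℝ) < 6 ^ k := by positivity
    have hnum : (∑ q : Fin k → C5Type,
        if ∀ g : Fin k,
            ∑ j ∈ involvedSet (q g), f (g, j) (inputBit (q g) j) = targetBit (q g)
        then (if f p (inputBit (q p.1) p.2) = 1 then v1 else v0) else 0)
        ≤ (5 : ℝ) ^ k * v1 := by
      have hv1' : 0 ≤ v1 := hv0.trans hv01
      calc (∑ q : Fin k → C5Type,
          if ∀ g : Fin k,
              ∑ j ∈ involvedSet (q g), f (g, j) (inputBit (q g) j) = targetBit (q g)
          then (if f p (inputBit (q p.1) p.2) = 1 then v1 else v0) else 0)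
          ≤ ∑ q : Fin k → C5Type,
            if ∀ g : Fin k,
                ∑ j ∈ involvedSet (q g), f (g, j) (inputBit (q g) j) = targetBit (q g)
            then v1 else 0 := by
            apply Finset.sum_le_sum
            intro q _
            split_ifs with h1 h2 <;> simp [hv01, hv1']
        _ = ((univ.filter (fun q : Fin k → C5Type => ∀ g : Fin k,
              ∑ j ∈ involvedSet (q g), f (g, j) (inputBit (q g) j) = targetBit (q g))).card : ℝ)
              * v1 := by
            rw [Finset.sum_ite, Finset.sum_const, Finset.sum_const_zero, add_zero, nsmul_eq_mul]
        _ ≤ (5 : ℝ) ^ k * v1 := by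
            apply mul_le_mul_of_nonneg_right _ hv1'
            have hfe : (univ.filter (fun q : Fin k → C5Type => ∀ g : Fin k,
                ∑ j ∈ involvedSet (q g), f (g, j) (inputBit (q g) j) = targetBit (q g)))
                = Fintype.piFinset S := by
              ext q
              simp [Fintype.mem_piFinset, hS]
            rw [hfe]
            have hcard : (Fintype.piFinset S).card ≤ 5 ^ k := by
              rw [Fintype.card_piFinset]
              calc ∏ g : Fin k, (S g).card ≤ ∏ _g : Fin k, 5 :=
                    Finset.prod_le_prod' (fun g _ => winning_card_le _)
                _ = 5 ^ k := by simp
            calc ((Fintype.piFinset S).card : ℝ) ≤ ((5 ^ k : ℕ) : ℝ) := by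
                  exact_mod_cast hcard
              _ = (5 : ℝ) ^ k := by push_cast; ring
    have : kFoldUtil k v0 v1 f p ≤ ((5 : ℝ) ^ k * v1) / 6 ^ k := by
      unfold kFoldUtil
      exact div_le_div_of_nonneg_right hnum h6.le
    refine this.trans_eq ?_
    rw [div_pow]
    ring
  refine ⟨hmain, ?_⟩
  have hv1' : 0 ≤ v1 := hv0.trans hv01
  have hk' : (1 : ℝ) ≤ (k : ℝ) := by exact_mod_cast hk
  have hpos : (0 : ℝ) < 5 * k := by nlinarith
  rw [div_le_iff₀ hpos]
  have hsum : (∑ p : Fin k × ZMod 5, kFoldUtil k v0 v1 f p)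
      ≤ (Fintype.card (Fin k × ZMod 5)) • ((5 / 6) ^ k * v1) := by
    simpa using Finset.sum_le_card_nsmul univ _ _ (fun p _ => hmain p)
  have hc : (Fintype.card (Fin k × ZMod 5)) = k * 5 := by simp
  rw [hc, nsmul_eq_mul] at hsum
  calc (∑ p : Fin k × ZMod 5, kFoldUtil k v0 v1 f p)
      ≤ ((k * 5 : ℕ) : ℝ) * ((5 / 6) ^ k * v1) := hsum
    _ = (5 / 6) ^ k * v1 * (5 * k) := by push_cast; ring
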